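/- The q,t-symmetric polynomial Σ_{g ∈ DS_n} q^{dinv(g)} t^{area(g)} specializes at q = 1 and at t = 1 to the same polynomial: Σ_{g ∈ DS_n} q^{area(g)} = Σ_{g ∈ DS_n} q^{dinv(g)}, i.e., the statistics area and dinv are equidistributed on Dyck sequences of length n. -/

import Mathlib

/-- A Dyck sequence of length `n`: `g 0 = 0` and `g (i+1) ≤ g i + 1`. -/
def IsDyckSeq {n : ℕ} (g : Fin n → ℕ) : Prop :=
  (∀ i : Fin n, (i : ℕ) = 0 → g i = 0) ∧
  (∀ i j : Fin n, (j : ℕ) = (i : ℕ) + 1 → g j ≤ g i + 1)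

/-- The area statistic of a Dyck sequence. -/
def area {n : ℕ} (g : Fin n → ℕ) : ℕ := ∑ i, g i

/-- The dinv statistic: pairs `i < j` with `g i - g j ∈ {0, 1}`. -/
def dinv {n : ℕ} (g : Fin n → ℕ) : ℕ :=
  (Finset.univ.filter (fun p : Fin n × Fin n =>
    p.1 < p.2 ∧ (g p.1 = g p.2 ∨ g p.1 = g p.2 + 1))).card

/-! ### List-level definitions -/

def DSstep (a b : ℕ) : Prop := b ≤ a + 1

lemma chain'_iff_isChain {R : ℕ → ℕ → Prop} {l : List ℕ} :
    List.Chain' R l ↔ List.IsChain R l := Iff.rfl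

instance : DecidableRel DSstep := fun a b => inferInstanceAs (Decidable (b ≤ a + 1))

def DyckL (l : List ℕ) : Prop := l.Chain' DSstep ∧ l.head?.getD 0 = 0

instance : DecidablePred DyckL := fun l => inferInstanceAs (Decidable (List.IsChain DSstep l ∧ _))

def zerosL (l : List ℕ) : ℕ := l.count 0

def areaL (l : List ℕ) : ℕ := l.sum

def ellL : List ℕ → ℕ
  | [] => 0
  | (a :: t) => (a :: t).getLast (by simp) + 1

def dinvL : List ℕ → ℕ
  | [] => 0
  | a :: t => t.count a + (if a = 0 then 0 else t.count (a - 1)) + dinvL t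

/-- Dyck lists of length `n`. -/
def DL : ℕ → Finset (List ℕ)
  | 0 => {[]}
  | n+1 => (DL n).biUnion fun x => (Finset.range (ellL x + 1)).image fun v => x ++ [v]

lemma ellL_cons (a : ℕ) (t : List ℕ) : ellL (a :: t) = (a :: t).getLast (by simp) + 1 := rfl

lemma ellL_eq_getLast {l : List ℕ} (h : l ≠ []) : ellL l = l.getLast h + 1 := by
  cases l with
  | nil => exact absurd rfl h
  | cons a t => rfl

lemma dyckL_nil : DyckL [] := ⟨List.IsChain.nil, rfl⟩

lemma dyckL_append_singleton {x : List ℕ} {v : ℕ} :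
    DyckL (x ++ [v]) ↔ DyckL x ∧ v ≤ ellL x := by
  constructor
  · rintro ⟨hc, hh⟩
    rcases List.isChain_append.1 hc with ⟨h1, -, h3⟩
    cases x with
    | nil =>
      simp at hh
      exact ⟨dyckL_nil, by simp [hh, ellL]⟩
    | cons a t =>
      refine ⟨⟨h1, by simpa using hh⟩, ?_⟩
      have := h3 ((a :: t).getLast (by simp)) (List.getLast?_eq_getLast (by simp)) v rfl
      rw [ellL_cons]; exact this
  · rintro ⟨⟨hc, hh⟩, hv⟩
    constructor
    · refine List.isChain_append.2 ⟨hc, by simp, ?_⟩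
      intro a ha b hb
      simp only [List.head?_cons, Option.mem_def, Option.some.injEq] at hb
      subst hb
      cases x with
      | nil => simp at ha
      | cons c t =>
        rw [List.getLast?_eq_getLast (by simp)] at ha
        simp only [Option.mem_def, Option.some.injEq] at ha
        subst ha
        rw [ellL_cons] at hv
        exact hv
    · cases x with
      | nil =>
        simp only [List.nil_append, List.head?_cons, Option.getD_some]
        simpa [ellL] using hv
      | cons c t => simpa using hh

lemma mem_DL {n : ℕ} {l : List ℕ} : l ∈ DL n ↔ DyckL l ∧ l.length = n := by
  induction n generalizing l with
  | zero =>
    simp only [DL, Finset.mem_singleton, List.length_eq_zero_iff]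
    constructor
    · rintro rfl; exact ⟨dyckL_nil, rfl⟩
    · rintro ⟨-, rfl⟩; rfl
  | succ n ih =>
    simp only [DL, Finset.mem_biUnion, Finset.mem_image, Finset.mem_range]
    constructor
    · rintro ⟨x, hx, v, hv, rfl⟩
      rcases ih.1 hx with ⟨hd, hl⟩
      refine ⟨dyckL_append_singleton.2 ⟨hd, by omega⟩, by simp [hl]⟩
    · rintro ⟨hd, hl⟩
      have hne : l ≠ [] := by rintro rfl; simp at hl
      refine ⟨l.dropLast, ?_, l.getLast hne, ?_, ?_⟩
      · rcases dyckL_append_singleton.1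
          (by rw [List.dropLast_append_getLast hne]; exact hd) with ⟨h1, -⟩
        refine ih.2 ⟨h1, ?_⟩
        have := l.length_dropLast
        omega
      · rcases dyckL_append_singleton.1
          (by rw [List.dropLast_append_getLast hne]; exact hd) with ⟨-, h2⟩
        omega
      · exact List.dropLast_append_getLast hne

/-! ### Transfer between `Fin n → ℕ` and lists -/

def toFun (n : ℕ) (l : List ℕ) : Fin n → ℕ := fun i => l.getD i 0

lemma toFun_zero {m a} {t : List ℕ} : toFun (m+1) (a::t) 0 = a := rfl

lemma toFun_succ {m a} {t : List ℕ} (j : Fin m) : toFun (m+1) (a::t) j.succ = toFun m t j := by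
  simp [toFun, List.getD_cons_succ]

lemma toFun_injOn {n : ℕ} : Set.InjOn (toFun n) (DL n : Set (List ℕ)) := by
  intro l hl l' hl' h
  rcases mem_DL.1 hl with ⟨-, h1⟩
  rcases mem_DL.1 hl' with ⟨-, h2⟩
  refine List.ext_getElem (by omega) fun i hi1 hi2 => ?_
  have := congrFun h ⟨i, by omega⟩
  simp only [toFun] at this
  rwa [List.getD_eq_getElem _ _ hi1, List.getD_eq_getElem _ _ hi2] at this

lemma chain'_iff_getD {l : List ℕ} :
    l.Chain' DSstep ↔ ∀ i : ℕ, i + 1 < l.length → l.getD (i+1) 0 ≤ l.getD i 0 + 1 := by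
  rw [chain'_iff_isChain, List.isChain_iff_getElem]
  constructor
  · intro h i hi
    have := h i (by omega)
    rwa [List.getD_eq_getElem _ _ (by omega), List.getD_eq_getElem _ _ (by omega)]
  · intro h i hi
    have := h i (by omega)
    rwa [List.getD_eq_getElem _ _ (by omega), List.getD_eq_getElem _ _ (by omega)] at this

lemma isDyckSeq_iff_toFun {n : ℕ} {l : List ℕ} (hl : l.length = n) :
    IsDyckSeq (toFun n l) ↔ DyckL l := by
  subst hl
  constructor
  · rintro ⟨h0, hs⟩
    constructor
    · rw [chain'_iff_getD]
      intro i hi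
      exact hs ⟨i, by omega⟩ ⟨i+1, by omega⟩ rfl
    · cases l with
      | nil => rfl
      | cons a t =>
        have := h0 ⟨0, by simp⟩ rfl
        simpa [toFun] using this
  · rintro ⟨hc, hh⟩
    constructor
    · rintro ⟨i, hi⟩ (h0 : i = 0)
      subst h0
      cases l with
      | nil => simp at hi
      | cons a t => simpa [toFun] using hh
    · rintro ⟨i, hi⟩ ⟨j, hj⟩ (h : j = i + 1)
      subst h
      exact chain'_iff_getD.1 hc i (by omega)

lemma area_toFun : ∀ (l : List ℕ) (n : ℕ), l.length = n → area (toFun n l) = areaL l := by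
  intro l
  induction l with
  | nil =>
    rintro n h
    cases n
    · simp [area, areaL]
    · simp at h
  | cons a t ih =>
    rintro n h
    cases n with
    | zero => simp at h
    | succ m =>
      have ht : t.length = m := by simpa using h
      rw [area, Fin.sum_univ_succ, toFun_zero]
      simp only [toFun_succ]
      rw [show (∑ i : Fin m, toFun m t i) = area (toFun m t) from rfl, ih m ht]
      simp [areaL]

lemma count_eq_sum : ∀ (t : List ℕ) (n : ℕ), t.length = n → ∀ a : ℕ,
    (∑ j : Fin n, if a = toFun n t j then 1 else 0) = t.count a := by
  intro t
  induction t with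
  | nil =>
    rintro n h a
    cases n
    · simp
    · simp at h
  | cons b r ih =>
    rintro n h a
    cases n with
    | zero => simp at h
    | succ m =>
      have hr : r.length = m := by simpa using h
      rw [Fin.sum_univ_succ, toFun_zero]
      simp only [toFun_succ]
      rw [ih m hr a, List.count_cons]
      rcases eq_or_ne a b with rfl | hab
      · simp [Nat.add_comm]
      · simp [hab, Ne.symm hab]

lemma count_eq_sum' : ∀ (t : List ℕ) (n : ℕ), t.length = n → ∀ a : ℕ,
    (∑ j : Fin n, if a = toFun n t j + 1 then 1 else 0)
      = if a = 0 then 0 else t.count (a - 1) := by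
  intro t n h a
  rcases Nat.eq_zero_or_pos a with rfl | ha
  · simp
  · obtain ⟨c, rfl⟩ : ∃ c, a = c + 1 := ⟨a - 1, by omega⟩
    have he : ∀ j : Fin n, (if c + 1 = toFun n t j + 1 then (1:ℕ) else 0)
        = if c = toFun n t j then 1 else 0 := by
      intro j
      rcases eq_or_ne c (toFun n t j) with h' | h'
      · simp [h']
      · simp [h', fun hh : c + 1 = toFun n t j + 1 => h' (by omega)]
    simp only [he]
    rw [count_eq_sum t n h c]
    simp

lemma dinv_eq_double_sum {n : ℕ} (g : Fin n → ℕ) :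
    dinv g = ∑ i : Fin n, ∑ j : Fin n,
      if i < j ∧ (g i = g j ∨ g i = g j + 1) then 1 else 0 := by
  rw [dinv, Finset.card_filter, Fintype.sum_prod_type]

lemma dinv_toFun : ∀ (l : List ℕ) (n : ℕ), l.length = n → dinv (toFun n l) = dinvL l := by
  intro l
  induction l with
  | nil =>
    rintro n h
    cases n
    · simp [dinv_eq_double_sum, dinvL]
    · simp at h
  | cons a t ih =>
    rintro n h
    cases n with
    | zero => simp at h
    | succ m =>
      have ht : t.length = m := by simpa using h
      rw [dinv_eq_double_sum, Fin.sum_univ_succ, dinvL]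
      have h1 : (∑ j : Fin (m+1), if (0 : Fin (m+1)) < j ∧
          (toFun (m+1) (a::t) 0 = toFun (m+1) (a::t) j ∨
           toFun (m+1) (a::t) 0 = toFun (m+1) (a::t) j + 1) then (1:ℕ) else 0)
          = t.count a + (if a = 0 then 0 else t.count (a - 1)) := by
        rw [Fin.sum_univ_succ, if_neg (by simp), zero_add]
        have he : ∀ j : Fin m, (if (0 : Fin (m+1)) < j.succ ∧
            (toFun (m+1) (a::t) 0 = toFun (m+1) (a::t) j.succ ∨
             toFun (m+1) (a::t) 0 = toFun (m+1) (a::t) j.succ + 1) then (1:ℕ) else 0)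
            = (if a = toFun m t j then 1 else 0) + (if a = toFun m t j + 1 then 1 else 0) := by
          intro j
          rw [toFun_succ, toFun_zero]
          have hpos : (0 : Fin (m+1)) < j.succ := j.succ_pos
          by_cases hA : a = toFun m t j
          · have hB : ¬ a = toFun m t j + 1 := by omega
            simp [hpos, hA, hB]
          · by_cases hB : a = toFun m t j + 1
            · simp [hpos, hA, hB]
            · simp [hpos, hA, hB]
        rw [Finset.sum_congr rfl (fun j _ => he j), Finset.sum_add_distrib,
          count_eq_sum t m ht a, count_eq_sum' t m ht a]
      rw [h1]
      congr 1
      rw [← ih m ht, dinv_eq_double_sum]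
      apply Finset.sum_congr rfl
      intro i _
      rw [Fin.sum_univ_succ, if_neg (by simp [Fin.lt_def]), zero_add]
      apply Finset.sum_congr rfl
      intro j _
      rw [toFun_succ, toFun_succ]
      congr 2
      simp [Fin.succ_lt_succ_iff]

/-! ### dinv side: stripping zeros -/

def stripL (l : List ℕ) : List ℕ :=
  l.filterMap fun a => match a with | 0 => none | b+1 => some b

@[simp] lemma stripL_nil : stripL [] = [] := rfl
@[simp] lemma stripL_zero_cons (t : List ℕ) : stripL (0 :: t) = stripL t := rfl
@[simp] lemma stripL_succ_cons (a : ℕ) (t : List ℕ) : stripL ((a+1) :: t) = a :: stripL t := rfl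

def labs : List ℕ → Multiset ℕ
  | [] => 0
  | 0 :: t => 0 ::ₘ labs t
  | 1 :: t => (labs t).map (· + 1)
  | (_+2) :: t => labs t

@[simp] lemma labs_nil : labs [] = 0 := rfl
@[simp] lemma labs_zero_cons (t : List ℕ) : labs (0 :: t) = 0 ::ₘ labs t := rfl
@[simp] lemma labs_one_cons (t : List ℕ) : labs (1 :: t) = (labs t).map (· + 1) := rfl
@[simp] lemma labs_two_cons (a : ℕ) (t : List ℕ) : labs ((a+2) :: t) = labs t := rfl

def insZ (c : ℕ → ℕ) : List ℕ → ℕ → List ℕ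
  | [], s => List.replicate (c s) 0
  | 0 :: t, s => List.replicate (c s) 0 ++ 1 :: insZ c t (s+1)
  | (a+1) :: t, s => (a+2) :: insZ c t s

@[simp] lemma insZ_nil (c : ℕ → ℕ) (s : ℕ) : insZ c [] s = List.replicate (c s) 0 := rfl
lemma insZ_zero_cons (c : ℕ → ℕ) (t : List ℕ) (s : ℕ) :
    insZ c (0 :: t) s = List.replicate (c s) 0 ++ 1 :: insZ c t (s+1) := rfl
lemma insZ_succ_cons (c : ℕ → ℕ) (a : ℕ) (t : List ℕ) (s : ℕ) :
    insZ c ((a+1) :: t) s = (a+2) :: insZ c t s := rfl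

def dec1 (x : List ℕ) (m : Multiset ℕ) : List ℕ := 0 :: insZ (fun j => m.count j) x 0

/-- count in strip -/
lemma count_stripL (t : List ℕ) (b : ℕ) : (stripL t).count b = t.count (b+1) := by
  induction t with
  | nil => rfl
  | cons a r ih =>
    rcases a with _ | a
    · simp [List.count_cons, ih]
    · simp only [stripL_succ_cons, List.count_cons, ih]
      congr 1
      by_cases h : a = b
      · simp [h]
      · simp [h, fun hh : a + 1 = b + 1 => h (by omega)]

lemma length_stripL (t : List ℕ) : (stripL t).length + zerosL t = t.length := by
  induction t with
  | nil => rfl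
  | cons a r ih =>
    rcases a with _ | a
    · rw [stripL_zero_cons]
      have hz : zerosL (0 :: r) = zerosL r + 1 := by simp [zerosL, List.count_cons]
      rw [hz, List.length_cons]
      omega
    · rw [stripL_succ_cons]
      have hz : zerosL ((a+1) :: r) = zerosL r := by simp [zerosL, List.count_cons]
      rw [hz, List.length_cons, List.length_cons]
      omega

lemma card_labs (t : List ℕ) : Multiset.card (labs t) = zerosL t := by
  induction t with
  | nil => rfl
  | cons a r ih =>
    rcases a with _ | _ | a
    · rw [labs_zero_cons, Multiset.card_cons, ih]
      simp [zerosL, List.count_cons]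
    · rw [labs_one_cons, Multiset.card_map, ih]
      simp [zerosL, List.count_cons]
    · rw [labs_two_cons, ih]
      simp [zerosL, List.count_cons]

lemma labs_le (t : List ℕ) : ∀ a ∈ labs t, a ≤ t.count 1 := by
  induction t with
  | nil => simp
  | cons b r ih =>
    rcases b with _ | _ | b
    · intro a ha
      rcases Multiset.mem_cons.1 ha with rfl | ha
      · omega
      · have := ih a ha
        simp [List.count_cons]
        omega
    · intro a ha
      rcases Multiset.mem_map.1 ha with ⟨v, hv, rfl⟩
      have := ih v hv
      simp [List.count_cons]
      omega
    · intro a ha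
      have := ih a ha
      simp [List.count_cons, (by omega : ¬ (b+2 = 1))]
      omega

/-- Key dinv decomposition. -/
lemma dinvL_strip (l : List ℕ) :
    dinvL l = dinvL (stripL l) + (zerosL l).choose 2 + (labs l).sum := by
  induction l with
  | nil => rfl
  | cons a t ih =>
    have hcount : t.count 0 = zerosL t := rfl
    rcases a with _ | _ | a
    · -- head 0
      rw [dinvL, ih, stripL_zero_cons, labs_zero_cons, Multiset.sum_cons]
      have hz : zerosL (0 :: t) = zerosL t + 1 := by simp [zerosL, List.count_cons]
      rw [hz]
      have hch : (zerosL t + 1).choose 2 = zerosL t + (zerosL t).choose 2 := by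
        rw [Nat.choose_succ_succ]
        simp [Nat.choose_one_right]
      rw [hch, if_pos rfl]
      omega
    · -- head 1
      simp only [Nat.zero_add]
      rw [dinvL, ih, stripL_succ_cons, labs_one_cons, dinvL]
      have h1 : (stripL t).count 0 = t.count 1 := count_stripL t 0
      have h2 : (Multiset.map (fun x => x + 1) (labs t)).sum
          = (labs t).sum + Multiset.card (labs t) := by
        rw [Multiset.sum_map_add]
        simp [Multiset.map_id']
      have h3 : Multiset.card (labs t) = zerosL t := card_labs t
      have hz : zerosL (1 :: t) = zerosL t := by simp [zerosL, List.count_cons]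
      rw [if_neg (by omega : ¬ (1 = 0)), if_pos rfl]
      have h4 : (1:ℕ) - 1 = 0 := rfl
      rw [h4, h2, hz]
      omega
    · -- head a+1+1
      rw [dinvL, ih, stripL_succ_cons, dinvL, labs_two_cons]
      have h1 : (stripL t).count (a+1) = t.count (a+1+1) := count_stripL t (a+1)
      have h2 : (stripL t).count a = t.count (a+1) := count_stripL t a
      have hz : zerosL ((a+1+1) :: t) = zerosL t := by simp [zerosL, List.count_cons]
      rw [hz, if_neg (by omega : ¬ (a+1+1 = 0)), if_neg (by omega : ¬ (a+1 = 0))]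
      have e1 : a + 1 + 1 - 1 = a + 1 := by omega
      have e2 : a + 1 - 1 = a := by omega
      rw [e1, e2]
      omega

/-! Chain lemmas for insZ -/

lemma chain_mono {p q : ℕ} {t : List ℕ} (h : p ≤ q) (hc : List.Chain DSstep p t) :
    List.Chain DSstep q t := by
  cases t with
  | nil => exact List.Chain.nil
  | cons a r =>
    rcases List.chain_cons.1 hc with ⟨h1, h2⟩
    exact List.chain_cons.2 ⟨by unfold DSstep at *; omega, h2⟩

lemma chain_replicate0 (q r : ℕ) : List.Chain DSstep q (List.replicate r 0) := by
  induction r generalizing q with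
  | zero => exact List.Chain.nil
  | succ r ih =>
    rw [List.replicate_succ]
    exact List.chain_cons.2 ⟨by unfold DSstep; omega, ih 0⟩

lemma chain_splice {w : List ℕ} (hw : List.Chain DSstep 1 w) (q r : ℕ) :
    List.Chain DSstep q (List.replicate r 0 ++ 1 :: w) := by
  induction r generalizing q with
  | zero => exact List.chain_cons.2 ⟨by unfold DSstep; omega, hw⟩
  | succ r ih =>
    rw [List.replicate_succ, List.cons_append]
    exact List.chain_cons.2 ⟨by unfold DSstep; omega, ih 0⟩

lemma chain_insZ (c : ℕ → ℕ) : ∀ (x : List ℕ) (s p : ℕ),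
    List.Chain DSstep p x → List.Chain DSstep (p+1) (insZ c x s) := by
  intro x
  induction x with
  | nil => intro s p _; exact chain_replicate0 _ _
  | cons a t ih =>
    intro s p hc
    rcases List.chain_cons.1 hc with ⟨h1, h2⟩
    rcases a with _ | a
    · rw [insZ_zero_cons]
      exact chain_splice (ih (s+1) 0 h2) _ _
    · rw [insZ_succ_cons]
      refine List.chain_cons.2 ⟨by unfold DSstep at *; omega, ?_⟩
      exact ih s (a+1) h2

lemma dyck_cons_iff {a : ℕ} {t : List ℕ} : DyckL (a :: t) ↔ a = 0 ∧ List.Chain DSstep a t := by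
  constructor
  · rintro ⟨h1, h2⟩
    simp only [List.head?_cons, Option.getD_some] at h2
    exact ⟨h2, h1⟩
  · rintro ⟨rfl, h⟩
    exact ⟨h, rfl⟩

lemma dyck_dec1 {x : List ℕ} (hx : DyckL x) (m : Multiset ℕ) : DyckL (dec1 x m) := by
  rw [dec1, dyck_cons_iff]
  refine ⟨rfl, ?_⟩
  cases x with
  | nil => exact chain_replicate0 _ _
  | cons a t =>
    rcases dyck_cons_iff.1 hx with ⟨rfl, hc⟩
    rw [insZ_zero_cons]
    exact chain_splice (chain_insZ _ t 1 0 hc) _ _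

/-! insZ computations -/

lemma stripL_replicate_append (r : ℕ) (w : List ℕ) :
    stripL (List.replicate r 0 ++ w) = stripL w := by
  induction r with
  | zero => rfl
  | succ r ih => rw [List.replicate_succ, List.cons_append, stripL_zero_cons, ih]

lemma stripL_insZ (c : ℕ → ℕ) : ∀ (x : List ℕ) (s : ℕ), stripL (insZ c x s) = x := by
  intro x
  induction x with
  | nil =>
    intro s
    rw [insZ_nil, ← List.append_nil (List.replicate (c s) 0), stripL_replicate_append]
    rfl
  | cons a t ih =>
    intro s
    rcases a with _ | a
    · rw [insZ_zero_cons, stripL_replicate_append, stripL_succ_cons, ih]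
    · rw [insZ_succ_cons, stripL_succ_cons, ih]

lemma zerosL_replicate_append (r : ℕ) (w : List ℕ) :
    zerosL (List.replicate r 0 ++ w) = r + zerosL w := by
  unfold zerosL
  rw [List.count_append, List.count_replicate]
  simp

lemma zerosL_insZ (c : ℕ → ℕ) : ∀ (x : List ℕ) (s : ℕ),
    zerosL (insZ c x s) = ∑ j ∈ Finset.range (zerosL x + 1), c (s + j) := by
  intro x
  induction x with
  | nil =>
    intro s
    rw [insZ_nil, ← List.append_nil (List.replicate (c s) 0), zerosL_replicate_append]
    rw [show zerosL ([] : List ℕ) = 0 from rfl, Finset.sum_range_one, Nat.add_zero, Nat.add_zero]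
  | cons a t ih =>
    intro s
    rcases a with _ | a
    · rw [insZ_zero_cons, zerosL_replicate_append]
      have h1 : zerosL (1 :: insZ c t (s+1)) = zerosL (insZ c t (s+1)) := by
        simp [zerosL, List.count_cons]
      have h2 : zerosL (0 :: t) = zerosL t + 1 := by simp [zerosL, List.count_cons]
      rw [h1, ih, h2]
      rw [Finset.sum_range_succ' (fun j => c (s + j)) (zerosL t + 1)]
      have hre : (∑ k ∈ Finset.range (zerosL t + 1), c (s + (k + 1)))
          = ∑ k ∈ Finset.range (zerosL t + 1), c (s + 1 + k) :=
        Finset.sum_congr rfl (fun k _ => by rw [show s + (k+1) = s+1+k by omega])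
      rw [hre]
      simp only [Nat.add_zero]
      omega
    · rw [insZ_succ_cons]
      have h1 : zerosL ((a+2) :: insZ c t s) = zerosL (insZ c t s) := by
        simp [zerosL, List.count_cons]
      have h2 : zerosL ((a+1) :: t) = zerosL t := by simp [zerosL, List.count_cons]
      rw [h1, ih, h2]

lemma labs_replicate_append (r : ℕ) (w : List ℕ) :
    labs (List.replicate r 0 ++ w) = Multiset.replicate r 0 + labs w := by
  induction r with
  | zero => simp
  | succ r ih =>
    rw [List.replicate_succ, List.cons_append, labs_zero_cons, ih, Multiset.replicate_succ,
      Multiset.cons_add]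

lemma labs_insZ (c : ℕ → ℕ) : ∀ (x : List ℕ) (s : ℕ),
    labs (insZ c x s) = ∑ j ∈ Finset.range (zerosL x + 1), Multiset.replicate (c (s + j)) j := by
  intro x
  induction x with
  | nil =>
    intro s
    rw [insZ_nil, ← List.append_nil (List.replicate (c s) 0), labs_replicate_append]
    rw [show zerosL ([] : List ℕ) = 0 from rfl, Finset.sum_range_one, Nat.add_zero]
    simp
  | cons a t ih =>
    intro s
    rcases a with _ | a
    · rw [insZ_zero_cons, labs_replicate_append, labs_one_cons, ih]
      have h2 : zerosL (0 :: t) = zerosL t + 1 := by simp [zerosL, List.count_cons]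
      rw [h2]
      rw [Finset.sum_range_succ' (fun j => Multiset.replicate (c (s + j)) j) (zerosL t + 1)]
      have hmap : Multiset.map (fun x => x + 1)
          (∑ j ∈ Finset.range (zerosL t + 1), Multiset.replicate (c (s + 1 + j)) j)
          = ∑ j ∈ Finset.range (zerosL t + 1), Multiset.replicate (c (s + 1 + j)) (j + 1) := by
        rw [← Multiset.coe_mapAddMonoidHom, map_sum]
        simp [Multiset.map_replicate]
      rw [hmap]
      have hre : (∑ k ∈ Finset.range (zerosL t + 1), Multiset.replicate (c (s + (k + 1))) (k + 1))
          = ∑ k ∈ Finset.range (zerosL t + 1), Multiset.replicate (c (s + 1 + k)) (k + 1) :=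
        Finset.sum_congr rfl (fun k _ => by rw [show s + (k+1) = s+1+k by omega])
      rw [hre]
      simp only [Nat.add_zero]
      rw [add_comm]
    · rw [insZ_succ_cons, labs_two_cons, ih]
      have h2 : zerosL ((a+1) :: t) = zerosL t := by simp [zerosL, List.count_cons]
      rw [h2]

/-! insZ roundtrip -/

lemma insZ_congr : ∀ (x : List ℕ) (s : ℕ) (c c' : ℕ → ℕ),
    (∀ j, s ≤ j → c j = c' j) → insZ c x s = insZ c' x s := by
  intro x
  induction x with
  | nil => intro s c c' h; rw [insZ_nil, insZ_nil, h s le_rfl]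
  | cons a t ih =>
    intro s c c' h
    rcases a with _ | a
    · rw [insZ_zero_cons, insZ_zero_cons, h s le_rfl, ih (s+1) c c' (fun j hj => h j (by omega))]
    · rw [insZ_succ_cons, insZ_succ_cons, ih s c c' h]

lemma insZ_dec (x : List ℕ) (s : ℕ) (c c' : ℕ → ℕ)
    (hx : x = [] ∨ x.head? = some 0)
    (hne : ∀ j, j ≠ s → c j = c' j) (hs : c s = c' s + 1) :
    insZ c x s = 0 :: insZ c' x s := by
  rcases hx with rfl | hh
  · rw [insZ_nil, insZ_nil, hs, List.replicate_succ]
  · cases x with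
    | nil => simp at hh
    | cons a t =>
      have ha : a = 0 := by simpa using hh
      subst ha
      rw [insZ_zero_cons, insZ_zero_cons, hs, List.replicate_succ, List.cons_append]
      rw [insZ_congr t (s+1) c c' (fun j hj => hne j (by omega))]

lemma stripL_head (t : List ℕ) : List.Chain DSstep 0 t →
    stripL t = [] ∨ (stripL t).head? = some 0 := by
  induction t with
  | nil => intro _; left; rfl
  | cons a r ih =>
    intro hc
    rcases List.chain_cons.1 hc with ⟨h1, h2⟩
    rcases a with _ | a
    · rw [stripL_zero_cons]; exact ih h2
    · have : a = 0 := by unfold DSstep at h1; omega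
      subst this
      right; rfl

lemma insZ_roundtrip : ∀ (t : List ℕ) (s : ℕ) (c : ℕ → ℕ) (p : ℕ),
    List.Chain DSstep p t → (∀ j, c (s + j) = (labs t).count j) →
    insZ c (stripL t) s = t := by
  intro t
  induction t with
  | nil =>
    intro s c p _ hcnt
    have h0 : c s = 0 := by
      have := hcnt 0
      simpa using this
    rw [stripL_nil, insZ_nil, h0]
    rfl
  | cons a t' ih =>
    intro s c p hc hcnt
    rcases List.chain_cons.1 hc with ⟨h1, h2⟩
    rcases a with _ | _ | a
    · -- head 0
      rw [stripL_zero_cons]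
      set c' : ℕ → ℕ := fun i => if i = s then c i - 1 else c i with hc'
      have hcs : c s = (labs t').count 0 + 1 := by
        have := hcnt 0
        rw [Nat.add_zero] at this
        rw [this, labs_zero_cons, Multiset.count_cons, if_pos rfl]
      have hdec : insZ c (stripL t') s = 0 :: insZ c' (stripL t') s := by
        refine insZ_dec _ _ _ _ (stripL_head t' h2) (fun j hj => ?_) ?_
        · simp [hc', if_neg hj]
        · simp only [hc', if_pos rfl]
          omega
      rw [hdec]
      congr 1
      refine ih s c' 0 h2 (fun j => ?_)
      rcases Nat.eq_zero_or_pos j with rfl | hj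
      · simp only [hc', Nat.add_zero, if_pos rfl]
        omega
      · have hne : s + j ≠ s := by omega
        simp only [hc', if_neg hne]
        have := hcnt j
        rw [this, labs_zero_cons, Multiset.count_cons, if_neg (by omega : ¬ j = 0)]
        omega
    · -- head 1
      rw [Nat.zero_add] at *
      rw [stripL_succ_cons, insZ_zero_cons]
      have hcs : c s = 0 := by
        have := hcnt 0
        rw [Nat.add_zero] at this
        rw [this, labs_one_cons, Multiset.count_eq_zero]
        intro hmem
        rcases Multiset.mem_map.1 hmem with ⟨v, -, hv⟩
        omega
      rw [hcs]
      simp only [List.replicate_zero, List.nil_append]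
      congr 1
      refine ih (s+1) c 1 h2 (fun j => ?_)
      have := hcnt (j+1)
      rw [show s + (j + 1) = s + 1 + j by omega] at this
      rw [this, labs_one_cons]
      exact Multiset.count_map_eq_count' _ _ (add_left_injective 1) j
    · -- head a+2
      rw [stripL_succ_cons, insZ_succ_cons]
      congr 1
      refine ih s c (a+1+1) h2 (fun j => ?_)
      rw [hcnt j, labs_two_cons]

/-! multiset helpers -/

def MS (j s : ℕ) : Finset (Multiset ℕ) := ((Finset.range (s+1)).sym j).image Sym.toMultiset

lemma mem_MS {j s : ℕ} {m : Multiset ℕ} :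
    m ∈ MS j s ↔ Multiset.card m = j ∧ ∀ a ∈ m, a ≤ s := by
  unfold MS
  rw [Finset.mem_image]
  constructor
  · rintro ⟨v, hv, rfl⟩
    refine ⟨v.2, fun a ha => ?_⟩
    have := Finset.mem_sym_iff.1 hv a ha
    rw [Finset.mem_range] at this
    omega
  · rintro ⟨hcard, hmem⟩
    refine ⟨⟨m, hcard⟩, Finset.mem_sym_iff.2 (fun a ha => ?_), rfl⟩
    have ham : a ∈ m := ha
    exact Finset.mem_range.2 (by have := hmem a ham; omega)

lemma sum_count_eq_card {m : Multiset ℕ} {N : ℕ} (h : ∀ a ∈ m, a < N) :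
    ∑ j ∈ Finset.range N, m.count j = Multiset.card m := by
  rw [← Multiset.toFinset_sum_count_eq]
  refine (Finset.sum_subset (fun a ha => Finset.mem_range.2 (h a (Multiset.mem_toFinset.1 ha)))
    (fun x _ hx => ?_)).symm
  exact Multiset.count_eq_zero_of_notMem (fun hm => hx (Multiset.mem_toFinset.2 hm))

lemma sum_replicate_count {m : Multiset ℕ} {N : ℕ} (h : ∀ a ∈ m, a < N) :
    ∑ j ∈ Finset.range N, Multiset.replicate (m.count j) j = m := by
  have h1 : ∀ j : ℕ, Multiset.replicate (m.count j) j = m.count j • ({j} : Multiset ℕ) :=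
    fun j => (Multiset.nsmul_singleton _ _).symm
  simp only [h1]
  calc ∑ j ∈ Finset.range N, m.count j • ({j} : Multiset ℕ)
      = ∑ j ∈ m.toFinset, m.count j • ({j} : Multiset ℕ) := by
        refine (Finset.sum_subset
          (fun a ha => Finset.mem_range.2 (h a (Multiset.mem_toFinset.1 ha)))
          (fun x _ hx => ?_)).symm
        rw [Multiset.count_eq_zero_of_notMem (fun hm => hx (Multiset.mem_toFinset.2 hm)),
          zero_nsmul]
    _ = m := Multiset.toFinset_sum_count_nsmul_eq m

/-! dec1 statistics -/

lemma stripL_dec1 (x : List ℕ) (m : Multiset ℕ) : stripL (dec1 x m) = x := by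
  rw [dec1, stripL_zero_cons, stripL_insZ]

lemma zerosL_dec1 {x : List ℕ} {m : Multiset ℕ} (h : ∀ a ∈ m, a ≤ zerosL x) :
    zerosL (dec1 x m) = Multiset.card m + 1 := by
  rw [dec1]
  have : zerosL (0 :: insZ (fun j => m.count j) x 0)
      = zerosL (insZ (fun j => m.count j) x 0) + 1 := by
    simp [zerosL, List.count_cons]
  rw [this, zerosL_insZ]
  simp only [Nat.zero_add]
  rw [sum_count_eq_card (fun a ha => by have := h a ha; omega)]

lemma length_dec1 {x : List ℕ} {m : Multiset ℕ} (h : ∀ a ∈ m, a ≤ zerosL x) :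
    (dec1 x m).length = x.length + Multiset.card m + 1 := by
  have h1 := length_stripL (dec1 x m)
  rw [stripL_dec1, zerosL_dec1 h] at h1
  omega

lemma labs_dec1 {x : List ℕ} {m : Multiset ℕ} (h : ∀ a ∈ m, a ≤ zerosL x) :
    labs (dec1 x m) = 0 ::ₘ m := by
  rw [dec1, labs_zero_cons, labs_insZ]
  simp only [Nat.zero_add]
  rw [sum_replicate_count (fun a ha => by have := h a ha; omega)]

lemma dinvL_dec1 {x : List ℕ} {m : Multiset ℕ} (h : ∀ a ∈ m, a ≤ zerosL x) :
    dinvL (dec1 x m) = dinvL x + (Multiset.card m + 1).choose 2 + m.sum := by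
  rw [dinvL_strip (dec1 x m), stripL_dec1, zerosL_dec1 h, labs_dec1 h, Multiset.sum_cons,
    zero_add]

/-! strip preserves Dyck -/

lemma chain_stripL : ∀ (t : List ℕ) (p : ℕ),
    List.Chain DSstep (p+1) t → List.Chain DSstep p (stripL t) := by
  intro t
  induction t with
  | nil => intro p _; exact List.Chain.nil
  | cons a t' ih =>
    intro p hc
    rcases List.chain_cons.1 hc with ⟨h1, h2⟩
    rcases a with _ | a
    · rw [stripL_zero_cons]
      exact ih p (chain_mono (by omega) h2)
    · rw [stripL_succ_cons]
      refine List.chain_cons.2 ⟨by unfold DSstep at *; omega, ?_⟩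
      exact ih a h2

lemma dyck_stripL {l : List ℕ} (h : DyckL l) : DyckL (stripL l) := by
  cases l with
  | nil => exact dyckL_nil
  | cons a t =>
    rcases dyck_cons_iff.1 h with ⟨rfl, hc⟩
    rw [stripL_zero_cons]
    have hch : List.Chain DSstep 0 (stripL t) := chain_stripL t 0 (chain_mono (by omega) hc)
    rcases stripL_head t hc with he | hh
    · rw [he]; exact dyckL_nil
    · cases hs : stripL t with
      | nil => exact dyckL_nil
      | cons b r =>
        rw [hs] at hh hch
        have hb : b = 0 := by simpa using hh
        subst hb
        exact dyck_cons_iff.2 ⟨rfl, (List.chain_cons.1 hch).2⟩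

lemma dyck_head_zero {l : List ℕ} (h : DyckL l) (hne : l ≠ []) : ∃ t, l = 0 :: t := by
  cases l with
  | nil => exact absurd rfl hne
  | cons a t => exact ⟨t, by rw [(dyck_cons_iff.1 h).1]⟩

/-! The dinv-side decomposition -/

lemma D1 {M : Type} [AddCommMonoid M] (F : ℕ → ℕ → M) (n : ℕ) (hn : 1 ≤ n) :
    ∑ l ∈ DL n, F (dinvL l) (zerosL l)
      = ∑ k ∈ Finset.Icc 1 n,
          ∑ p ∈ (DL (n-k)).sigma (fun x => MS (k-1) (zerosL x)),
            F (dinvL p.1 + k.choose 2 + p.2.sum) k := by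
  have hmaps : ∀ l ∈ DL n, zerosL l ∈ Finset.Icc 1 n := by
    intro l hl
    rcases mem_DL.1 hl with ⟨hd, hlen⟩
    have hne : l ≠ [] := by rintro rfl; simp at hlen; omega
    rcases dyck_head_zero hd hne with ⟨t, rfl⟩
    rw [Finset.mem_Icc]
    constructor
    · have : zerosL (0 :: t) = zerosL t + 1 := by simp [zerosL, List.count_cons]
      omega
    · have := List.count_le_length (a := 0) (l := 0 :: t)
      unfold zerosL
      omega
  rw [← Finset.sum_fiberwise_of_maps_to hmaps (fun l => F (dinvL l) (zerosL l))]
  refine Finset.sum_congr rfl fun k hk => ?_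
  rw [Finset.mem_Icc] at hk
  refine Finset.sum_nbij' (i := fun l => (⟨stripL l, labs l.tail⟩ : (_ : List ℕ) × Multiset ℕ))
    (j := fun p => dec1 p.1 p.2) ?_ ?_ ?_ ?_ ?_
  · -- hi
    intro l hl
    rw [Finset.mem_filter] at hl
    obtain ⟨hln, hzl⟩ := hl
    rcases mem_DL.1 hln with ⟨hd, hlen⟩
    have hne : l ≠ [] := by rintro rfl; simp at hlen; omega
    rcases dyck_head_zero hd hne with ⟨t, rfl⟩
    have hz0 : zerosL (0 :: t) = zerosL t + 1 := by simp [zerosL, List.count_cons]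
    rw [Finset.mem_sigma]
    constructor
    · show stripL (0 :: t) ∈ DL (n - k)
      refine mem_DL.2 ⟨dyck_stripL hd, ?_⟩
      rw [stripL_zero_cons]
      have hls := length_stripL (0 :: t)
      rw [stripL_zero_cons] at hls
      simp only [List.length_cons] at hls
      have hlen' : t.length + 1 = n := by simpa using hlen
      omega
    · show labs ((0 :: t).tail) ∈ MS (k - 1) (zerosL (stripL (0 :: t)))
      rw [List.tail_cons, stripL_zero_cons, mem_MS]
      constructor
      · rw [card_labs]; omega
      · intro a ha
        have h1 := labs_le t a ha
        have h2 : zerosL (stripL t) = t.count 1 := by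
          show (stripL t).count 0 = t.count 1
          rw [count_stripL t 0]
        omega
  · -- hj
    rintro ⟨x, m⟩ hp
    rw [Finset.mem_sigma] at hp
    obtain ⟨hx, hm⟩ := hp
    rcases mem_DL.1 hx with ⟨hdx, hlx⟩
    rcases mem_MS.1 hm with ⟨hcard, hbound⟩
    rw [Finset.mem_filter]
    constructor
    · refine mem_DL.2 ⟨dyck_dec1 hdx m, ?_⟩
      rw [length_dec1 hbound, hlx, hcard]
      omega
    · rw [zerosL_dec1 hbound, hcard]
      omega
  · -- left inverse
    intro l hl
    dsimp only
    rw [Finset.mem_filter] at hl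
    obtain ⟨hln, hzl⟩ := hl
    rcases mem_DL.1 hln with ⟨hd, hlen⟩
    have hne : l ≠ [] := by rintro rfl; simp at hlen; omega
    rcases dyck_head_zero hd hne with ⟨t, rfl⟩
    simp only [List.tail_cons, stripL_zero_cons]
    rw [dec1]
    congr 1
    refine insZ_roundtrip t 0 _ 0 (dyck_cons_iff.1 hd).2 (fun j => ?_)
    rw [Nat.zero_add]
  · -- right inverse
    rintro ⟨x, m⟩ hp
    dsimp only
    rw [Finset.mem_sigma] at hp
    obtain ⟨hx, hm⟩ := hp
    rcases mem_MS.1 hm with ⟨hcard, hbound⟩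
    have h1 : stripL (dec1 x m) = x := stripL_dec1 x m
    have h2 : (dec1 x m).tail = insZ (fun j => m.count j) x 0 := rfl
    have h3 : labs ((dec1 x m).tail) = m := by
      rw [h2]
      have := labs_dec1 hbound
      rw [dec1, labs_zero_cons] at this
      exact (Multiset.cons_inj_right 0).1 this
    simp only [h1, h3]
  · -- weights
    intro l hl
    dsimp only
    rw [Finset.mem_filter] at hl
    obtain ⟨hln, hzl⟩ := hl
    rcases mem_DL.1 hln with ⟨hd, hlen⟩
    have hne : l ≠ [] := by rintro rfl; simp at hlen; omega
    rcases dyck_head_zero hd hne with ⟨t, rfl⟩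
    rw [dinvL_strip (0 :: t), hzl]
    simp only [List.tail_cons, stripL_zero_cons, labs_zero_cons, Multiset.sum_cons, zero_add]

/-! ### area side: blocks -/

def Desc (a b : ℕ) : Prop := b ≤ a

instance : IsTrans ℕ Desc := ⟨fun _ _ _ h1 h2 => le_trans h2 h1⟩
instance : IsAntisymm ℕ Desc := ⟨fun _ _ h1 h2 => le_antisymm h2 h1⟩

def ob : List ℕ → List ℕ
  | [] => [0]
  | a :: r => a :: (ob r).map (· + 1)

@[simp] lemma ob_nil : ob [] = [0] := rfl
@[simp] lemma ob_cons (a : ℕ) (r : List ℕ) : ob (a :: r) = a :: (ob r).map (· + 1) := rfl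

def unob : List ℕ → List ℕ
  | [] => []
  | [_] => []
  | a :: b :: r => a :: unob ((b :: r).map (· - 1))
termination_by l => l.length
decreasing_by simp

@[simp] lemma unob_nil : unob [] = [] := by rw [unob]
@[simp] lemma unob_single (a : ℕ) : unob [a] = [] := by rw [unob]
lemma unob_cons_cons (a b : ℕ) (r : List ℕ) :
    unob (a :: b :: r) = a :: unob ((b :: r).map (· - 1)) := by
  rw [unob]

lemma ob_ne_nil (t : List ℕ) : ob t ≠ [] := by cases t <;> simp

lemma length_ob (t : List ℕ) : (ob t).length = t.length + 1 := by
  induction t with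
  | nil => rfl
  | cons a r ih => simp [ih]

lemma length_unob : ∀ d : List ℕ, (unob d).length = d.length - 1
  | [] => by simp
  | [_] => by simp
  | a :: b :: r => by
    rw [unob_cons_cons, List.length_cons, length_unob ((b :: r).map (· - 1))]
    simp
termination_by d => d.length
decreasing_by simp

lemma sum_map_succ (w : List ℕ) : (w.map (· + 1)).sum = w.sum + w.length := by
  induction w with
  | nil => rfl
  | cons a r ih =>
    simp only [List.map_cons, List.sum_cons, ih, List.length_cons]
    omega

lemma sum_ob (t : List ℕ) : (ob t).sum = t.sum + (t.length + 1).choose 2 := by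
  induction t with
  | nil => simp
  | cons a r ih =>
    rw [ob_cons, List.sum_cons, sum_map_succ, ih, length_ob, List.sum_cons, List.length_cons]
    have h : (r.length + 1 + 1).choose 2 = (r.length + 1).choose 1 + (r.length + 1).choose 2 :=
      Nat.choose_succ_succ _ 1
    rw [Nat.choose_one_right] at h
    omega

lemma getLast?_ob (t : List ℕ) : (ob t).getLast? = some t.length := by
  induction t with
  | nil => rfl
  | cons a r ih =>
    rw [ob_cons, ← List.singleton_append, List.getLast?_append, List.getLast?_map, ih]
    rfl

lemma head?_ob (t : List ℕ) : (ob t).head? = some (t.headD 0) := by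
  cases t <;> rfl

lemma chain'_ob {t : List ℕ} (h : List.Chain' Desc t) : List.Chain' DSstep (ob t) := by
  induction t with
  | nil => exact List.IsChain.singleton 0
  | cons a r ih =>
    rw [ob_cons, chain'_iff_isChain, List.isChain_cons]
    have h2 : List.Chain' DSstep (ob r) := ih (List.IsChain.tail h)
    constructor
    · intro y hy
      rw [List.head?_map, head?_ob] at hy
      have hy' : r.headD 0 + 1 = y := by simpa using hy
      subst hy'
      show r.headD 0 + 1 ≤ a + 1
      cases r with
      | nil => simp
      | cons b r' =>
        have hab : Desc a b := (List.isChain_cons_cons.1 h).1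
        unfold Desc at hab
        simpa using hab
    · exact (List.isChain_map _).2 (List.IsChain.imp (fun u v huv => by unfold DSstep at *; omega) h2)

lemma chain_lb : ∀ (d : List ℕ) (m : ℕ), List.Chain' DSstep d →
    d.getLast? = some (m + (d.length - 1)) → ∀ y ∈ d, m ≤ y
  | [], m, _, hlast, y, hy => by simp at hy
  | [a], m, _, hlast, y, hy => by
    simp at hlast hy
    omega
  | a :: b :: r, m, hc, hlast, y, hy => by
    have hlast' : (b :: r).getLast? = some ((m+1) + ((b :: r).length - 1)) := by
      rw [List.getLast?_cons_cons] at hlast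
      rw [hlast]
      simp only [List.length_cons]
      congr 1
      omega
    have ih := chain_lb (b :: r) (m+1) (List.IsChain.tail hc) hlast'
    rcases List.mem_cons.1 hy with rfl | hy'
    · have hb : m + 1 ≤ b := ih b List.mem_cons_self
      have hab : DSstep y b := (List.isChain_cons_cons.1 hc).1
      unfold DSstep at hab
      omega
    · have := ih y hy'
      omega

lemma block_tail {a b : ℕ} {r : List ℕ} (hc : List.Chain' DSstep (a :: b :: r))
    (hl : (a :: b :: r).getLast? = some ((a :: b :: r).length - 1)) :
    List.Chain' DSstep ((b :: r).map (· - 1)) ∧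
    ((b :: r).map (· - 1)).getLast? = some (((b :: r).map (· - 1)).length - 1) ∧
    (∀ y ∈ b :: r, 1 ≤ y) := by
  have hlbr : (b :: r).getLast? = some (r.length + 1) := by
    rw [List.getLast?_cons_cons] at hl
    rw [hl]
    simp
  have hpos : ∀ y ∈ b :: r, 1 ≤ y := by
    apply chain_lb (b :: r) 1 (List.IsChain.tail hc)
    rw [hlbr]
    simp only [List.length_cons]
    congr 1
    omega
  refine ⟨?_, ?_, hpos⟩
  · exact (List.isChain_map _).2 ((List.IsChain.tail hc).imp
      (fun u v huv => by unfold DSstep at *; omega))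
  · rw [List.getLast?_map, hlbr]
    simp

lemma ob_unob : ∀ d : List ℕ, List.Chain' DSstep d → d.getLast? = some (d.length - 1) →
    ob (unob d) = d
  | [], _, hl => by simp at hl
  | [a], _, hl => by
    have : a = 0 := by simpa using hl
    subst this
    rw [unob_single]
    rfl
  | a :: b :: r, hc, hl => by
    obtain ⟨hcw, hlw, hpos⟩ := block_tail hc hl
    rw [unob_cons_cons, ob_cons, ob_unob ((b :: r).map (· - 1)) hcw hlw]
    congr 1
    rw [List.map_map]
    have hm : ∀ y ∈ b :: r, ((fun x => x + 1) ∘ (fun x => x - 1)) y = id y := by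
      intro y hy
      have := hpos y hy
      simp only [Function.comp_apply, id_eq]
      omega
    rw [List.map_congr_left hm, List.map_id]
termination_by d => d.length
decreasing_by simp

lemma unob_ob (t : List ℕ) : unob (ob t) = t := by
  induction t with
  | nil => simp
  | cons a r ih =>
    rw [ob_cons]
    rcases hm : (ob r).map (· + 1) with _ | ⟨c, w⟩
    · exact absurd (List.map_eq_nil_iff.1 hm) (ob_ne_nil r)
    · rw [unob_cons_cons, ← hm, List.map_map]
      have he : ∀ y ∈ ob r, ((fun x => x - 1) ∘ (fun x => x + 1)) y = id y := by
        intro y hy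
        simp
      rw [List.map_congr_left he, List.map_id, ih]

lemma chain'_unob : ∀ d : List ℕ, List.Chain' DSstep d → d.getLast? = some (d.length - 1) →
    List.Chain' Desc (unob d)
  | [], _, _ => by rw [unob_nil]; exact List.IsChain.nil
  | [a], _, _ => by rw [unob_single]; exact List.IsChain.nil
  | a :: b :: r, hc, hl => by
    obtain ⟨hcw, hlw, hpos⟩ := block_tail hc hl
    rw [unob_cons_cons, chain'_iff_isChain, List.isChain_cons]
    refine ⟨?_, chain'_unob ((b :: r).map (· - 1)) hcw hlw⟩
    intro y hy
    cases r with
    | nil => simp at hy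
    | cons c r' =>
      rw [List.map_cons, List.map_cons, unob_cons_cons] at hy
      have hy' : b - 1 = y := by simpa using hy
      subst hy'
      have hab : DSstep a b := (List.isChain_cons_cons.1 hc).1
      unfold DSstep at hab
      unfold Desc
      omega
termination_by d => d.length
decreasing_by simp

lemma head?_unob (a b : ℕ) (r : List ℕ) : (unob (a :: b :: r)).head? = some a := by
  rw [unob_cons_cons]; rfl

/-! sortD -/

def sortD (m : Multiset ℕ) : List ℕ := (Multiset.sort m (· ≤ ·)).reverse

lemma coe_sortD (m : Multiset ℕ) : (↑(sortD m) : Multiset ℕ) = m := by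
  rw [sortD, Multiset.coe_reverse, Multiset.sort_eq]

lemma length_sortD (m : Multiset ℕ) : (sortD m).length = Multiset.card m := by
  rw [sortD, List.length_reverse, Multiset.length_sort]

lemma sum_sortD (m : Multiset ℕ) : (sortD m).sum = m.sum := by
  rw [← Multiset.sum_coe, coe_sortD]

lemma chain'Desc_sortD (m : Multiset ℕ) : List.Chain' Desc (sortD m) := by
  apply List.Pairwise.isChain
  rw [sortD, List.pairwise_reverse]
  exact Multiset.pairwise_sort m (· ≤ ·)

lemma mem_sortD {a : ℕ} {m : Multiset ℕ} (h : a ∈ sortD m) : a ∈ m := by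
  rw [sortD] at h
  rw [List.mem_reverse] at h
  exact (Multiset.mem_sort _).1 h

lemma sortD_eq_self {w : List ℕ} (hw : List.Chain' Desc w) : sortD ↑w = w := by
  apply fun (p : List.Perm (sortD ↑w) w) s1 s2 => List.Perm.eq_of_pairwise' (r := Desc) s1 s2 p
  · exact Multiset.coe_eq_coe.1 (coe_sortD ↑w)
  · apply List.isChain_iff_pairwise.1 (chain'Desc_sortD _)
  · exact List.isChain_iff_pairwise.1 hw

/-! ellL helpers -/

lemma ellL_of_getLast? {l : List ℕ} {v : ℕ} (h : l.getLast? = some v) : ellL l = v + 1 := by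
  cases l with
  | nil => simp at h
  | cons a t =>
    rw [ellL_cons]
    rw [List.getLast?_eq_getLast (by simp)] at h
    have := Option.some.inj h
    omega

lemma getLast?_of_ellL {l : List ℕ} (h : l ≠ []) : l.getLast? = some (ellL l - 1) := by
  cases l with
  | nil => exact absurd rfl h
  | cons a t =>
    rw [List.getLast?_eq_getLast (by simp), ellL_cons]
    simp

lemma ellL_le {n : ℕ} {l : List ℕ} (h : l ∈ DL n) : ellL l ≤ n := by
  induction n generalizing l with
  | zero =>
    rw [show DL 0 = {[]} from rfl, Finset.mem_singleton] at h
    subst h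
    exact le_refl 0
  | succ n ih =>
    rw [show DL (n+1) = (DL n).biUnion fun x => (Finset.range (ellL x + 1)).image
      fun v => x ++ [v] from rfl, Finset.mem_biUnion] at h
    obtain ⟨x, hx, hv⟩ := h
    rw [Finset.mem_image] at hv
    obtain ⟨v, hv, rfl⟩ := hv
    rw [Finset.mem_range] at hv
    have h1 : (x ++ [v]).getLast? = some v := by
      rw [List.getLast?_append]
      rfl
    rw [ellL_of_getLast? h1]
    have := ih hx
    omega

lemma ellL_pos {l : List ℕ} (h : l ≠ []) : 1 ≤ ellL l := by
  cases l with
  | nil => exact absurd rfl h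
  | cons a t => rw [ellL_cons]; omega

/-! chain' of drop, head of drop bound -/

lemma chain'_drop {R : ℕ → ℕ → Prop} (j : ℕ) (l : List ℕ) (h : List.Chain' R l) :
    List.Chain' R (l.drop j) := by
  induction j with
  | zero => exact h
  | succ j ih =>
    rw [← List.tail_drop]
    exact List.IsChain.tail ih

lemma head_drop_le {l : List ℕ} (hd : DyckL l) (j : ℕ) :
    ∀ v ∈ (l.drop j).head?, v ≤ ellL (l.take j) := by
  intro v hv
  by_cases htk : l.take j = []
  · have hlne : l ≠ [] := by
      intro h0
      rw [h0] at hv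
      simp at hv
    have hj0 : j = 0 := by
      rcases List.take_eq_nil_iff.1 htk with h | h
      · exact h
      · exact absurd h hlne
    subst hj0
    rw [List.drop_zero] at hv
    cases l with
    | nil => simp at hv
    | cons a t =>
      have hva : a = v := by simpa using hv
      have ha : a = 0 := by simpa using hd.2
      rw [List.take_zero]
      show v ≤ 0
      omega
  · have hsplit : l = l.take j ++ l.drop j := (List.take_append_drop j l).symm
    have hc := hd.1
    rw [hsplit, chain'_iff_isChain, List.isChain_append] at hc
    obtain ⟨-, -, hjun⟩ := hc
    have hgl := List.getLast?_eq_getLast htk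
    have hv' := hjun _ hgl v hv
    rw [ellL_of_getLast? hgl]
    exact hv'

lemma head?_of_unob : ∀ {d : List ℕ} {b : ℕ} {w : List ℕ},
    unob d = b :: w → d.head? = some b
  | [], b, w, h => by simp at h
  | [_], b, w, h => by simp at h
  | a :: c :: r, b, w, h => by
    rw [unob_cons_cons] at h
    injection h with h1 h2
    rw [List.head?_cons, h1]

lemma dyck_append_ob {x t : List ℕ} (hx : DyckL x)
    (ht : List.Chain' Desc t) (hh : ∀ b ∈ t.head?, b ≤ ellL x) : DyckL (x ++ ob t) := by
  constructor
  · rw [chain'_iff_isChain, List.isChain_append]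
    refine ⟨hx.1, chain'_ob ht, ?_⟩
    intro u hu v hv
    rw [head?_ob] at hv
    have hv' : t.headD 0 = v := by simpa using hv
    subst hv'
    show t.headD 0 ≤ u + 1
    cases t with
    | nil => simp
    | cons b r =>
      have hb : b ≤ ellL x := hh b rfl
      have hex : ellL x = u + 1 := by
        cases x with
        | nil => simp at hu
        | cons a w =>
          rw [List.getLast?_eq_getLast (by simp)] at hu
          have := Option.some.inj hu
          rw [ellL_cons, this]
      simp only [List.headD_cons]
      omega
  · cases x with
    | nil =>
      simp only [List.nil_append]
      rw [show (ob t).head? = some (t.headD 0) from head?_ob t]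
      simp only [Option.getD_some]
      cases t with
      | nil => rfl
      | cons b r =>
        have := hh b rfl
        simp only [ellL] at this
        simp only [List.headD_cons]
        omega
    | cons a w =>
      have := hx.2
      simpa using this

/-! The area-side decomposition -/

lemma D2 {M : Type} [AddCommMonoid M] (F : ℕ → ℕ → M) (n : ℕ) (hn : 1 ≤ n) :
    ∑ l ∈ DL n, F (areaL l) (ellL l)
      = ∑ k ∈ Finset.Icc 1 n,
          ∑ p ∈ (DL (n-k)).sigma (fun x => MS (k-1) (ellL x)),
            F (areaL p.1 + k.choose 2 + p.2.sum) k := by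
  have hmaps : ∀ l ∈ DL n, ellL l ∈ Finset.Icc 1 n := by
    intro l hl
    rcases mem_DL.1 hl with ⟨hd, hlen⟩
    have hne : l ≠ [] := by rintro rfl; simp at hlen; omega
    rw [Finset.mem_Icc]
    exact ⟨ellL_pos hne, ellL_le hl⟩
  rw [← Finset.sum_fiberwise_of_maps_to hmaps (fun l => F (areaL l) (ellL l))]
  refine Finset.sum_congr rfl fun k hk => ?_
  rw [Finset.mem_Icc] at hk
  refine Finset.sum_nbij'
    (i := fun l => (⟨l.take (l.length - k), ↑(unob (l.drop (l.length - k)))⟩ :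
      (_ : List ℕ) × Multiset ℕ))
    (j := fun p => p.1 ++ ob (sortD p.2)) ?_ ?_ ?_ ?_ ?_
  · -- hi
    intro l hl
    rw [Finset.mem_filter] at hl
    obtain ⟨hln, hel⟩ := hl
    rcases mem_DL.1 hln with ⟨hd, hlen⟩
    have hne : l ≠ [] := by rintro rfl; simp at hlen; omega
    have hkn : k ≤ n := hk.2
    set d := l.drop (l.length - k) with hdd
    have hld : d.length = k := by
      rw [hdd, List.length_drop]
      omega
    have hdne : d ≠ [] := by
      intro h0
      rw [h0] at hld
      simp at hld
      omega
    have hglast : d.getLast? = some (k - 1) := by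
      have h1 : l.getLast? = some (k - 1) := by
        rw [getLast?_of_ellL hne, hel]
      have h2 : l = l.take (l.length - k) ++ d := (List.take_append_drop _ l).symm
      rw [h2, List.getLast?_append, getLast?_of_ellL hdne] at h1
      rw [getLast?_of_ellL hdne]
      simpa using h1
    have hchain : List.Chain' DSstep d := chain'_drop _ _ hd.1
    have hglast' : d.getLast? = some (d.length - 1) := by rw [hglast, hld]
    rw [Finset.mem_sigma]
    constructor
    · refine mem_DL.2 ⟨?_, ?_⟩
      · constructor
        · have hc := hd.1
          rw [show l = l.take (l.length - k) ++ d from (List.take_append_drop _ l).symm,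
            chain'_iff_isChain, List.isChain_append] at hc
          exact hc.1
        · cases htk : l.take (l.length - k) with
          | nil => rfl
          | cons a w =>
            have : l.head? = some a := by
              conv_lhs => rw [show l = l.take (l.length - k) ++ d from
                (List.take_append_drop _ l).symm]
              rw [htk]
              rfl
            have h2 := hd.2
            rw [this] at h2
            simpa using h2
      · rw [List.length_take]
        omega
    · show (↑(unob d) : Multiset ℕ) ∈ MS (k - 1) (ellL (l.take (l.length - k)))
      rw [mem_MS]
      constructor
      · rw [Multiset.coe_card, length_unob, hld]
      · intro a ha
        have ham : a ∈ unob d := ha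
        cases hu : unob d with
        | nil => rw [hu] at ham; simp at ham
        | cons b w =>
          have hbd : d.head? = some b := head?_of_unob hu
          have hble : b ≤ ellL (l.take (l.length - k)) :=
            head_drop_le hd _ b (by rw [← hdd, hbd]; rfl)
          have hchainu : List.Chain' Desc (unob d) := chain'_unob d hchain hglast'
          rw [hu] at hchainu ham
          rcases List.mem_cons.1 ham with rfl | ham'
          · exact hble
          · have hpw := List.isChain_iff_pairwise.1 hchainu
            have hba := (List.pairwise_cons.1 hpw).1 a ham'
            unfold Desc at hba
            omega
  · -- hj
    rintro ⟨x, m⟩ hp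
    dsimp only
    rw [Finset.mem_sigma] at hp
    obtain ⟨hx, hm⟩ := hp
    rcases mem_DL.1 hx with ⟨hdx, hlx⟩
    rcases mem_MS.1 hm with ⟨hcard, hbound⟩
    have hlsort : (sortD m).length = k - 1 := by rw [length_sortD, hcard]
    rw [Finset.mem_filter]
    have hglob : (x ++ ob (sortD m)).getLast? = some (k - 1) := by
      rw [List.getLast?_append, getLast?_ob, hlsort]
      rfl
    constructor
    · refine mem_DL.2 ⟨?_, ?_⟩
      · refine dyck_append_ob hdx (chain'Desc_sortD m) ?_
        intro b hb
        exact hbound b (mem_sortD (List.mem_of_mem_head? hb))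
      · rw [List.length_append, length_ob, hlsort, hlx]
        omega
    · rw [ellL_of_getLast? hglob]
      omega
  · -- left inverse
    intro l hl
    dsimp only
    rw [Finset.mem_filter] at hl
    obtain ⟨hln, hel⟩ := hl
    rcases mem_DL.1 hln with ⟨hd, hlen⟩
    have hne : l ≠ [] := by rintro rfl; simp at hlen; omega
    set d := l.drop (l.length - k) with hdd
    have hld : d.length = k := by rw [hdd, List.length_drop]; omega
    have hdne : d ≠ [] := by intro h0; rw [h0] at hld; simp at hld; omega
    have hglast : d.getLast? = some (k - 1) := by
      have h1 : l.getLast? = some (k - 1) := by rw [getLast?_of_ellL hne, hel]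
      have h2 : l = l.take (l.length - k) ++ d := (List.take_append_drop _ l).symm
      rw [h2, List.getLast?_append, getLast?_of_ellL hdne] at h1
      rw [getLast?_of_ellL hdne]
      simpa using h1
    have hchain : List.Chain' DSstep d := chain'_drop _ _ hd.1
    have hglast' : d.getLast? = some (d.length - 1) := by rw [hglast, hld]
    rw [sortD_eq_self (chain'_unob d hchain hglast'), ob_unob d hchain hglast']
    exact List.take_append_drop _ l
  · -- right inverse
    rintro ⟨x, m⟩ hp
    dsimp only
    rw [Finset.mem_sigma] at hp
    obtain ⟨hx, hm⟩ := hp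
    rcases mem_DL.1 hx with ⟨hdx, hlx⟩
    rcases mem_MS.1 hm with ⟨hcard, hbound⟩
    have hlsort : (sortD m).length = k - 1 := by rw [length_sortD, hcard]
    have hlen : (x ++ ob (sortD m)).length - k = x.length := by
      rw [List.length_append, length_ob, hlsort]
      omega
    rw [hlen, List.take_left, List.drop_left, unob_ob, coe_sortD]
  · -- weights
    intro l hl
    dsimp only
    rw [Finset.mem_filter] at hl
    obtain ⟨hln, hel⟩ := hl
    rcases mem_DL.1 hln with ⟨hd, hlen⟩
    have hne : l ≠ [] := by rintro rfl; simp at hlen; omega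
    set d := l.drop (l.length - k) with hdd
    have hld : d.length = k := by rw [hdd, List.length_drop]; omega
    have hdne : d ≠ [] := by intro h0; rw [h0] at hld; simp at hld; omega
    have hglast : d.getLast? = some (k - 1) := by
      have h1 : l.getLast? = some (k - 1) := by rw [getLast?_of_ellL hne, hel]
      have h2 : l = l.take (l.length - k) ++ d := (List.take_append_drop _ l).symm
      rw [h2, List.getLast?_append, getLast?_of_ellL hdne] at h1
      rw [getLast?_of_ellL hdne]
      simpa using h1
    have hchain : List.Chain' DSstep d := chain'_drop _ _ hd.1
    have hglast' : d.getLast? = some (d.length - 1) := by rw [hglast, hld]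
    rw [hel]
    congr 1
    have hsum : areaL l = areaL (l.take (l.length - k)) + d.sum := by
      rw [show l = l.take (l.length - k) ++ d from (List.take_append_drop _ l).symm]
      unfold areaL
      rw [List.sum_append]
      rw [List.take_append_drop]
    have hsd : d.sum = (unob d).sum + ((unob d).length + 1).choose 2 := by
      conv_lhs => rw [← ob_unob d hchain hglast']
      rw [sum_ob]
    have hlu : (unob d).length = k - 1 := by rw [length_unob, hld]
    have hcoe : (↑(unob d) : Multiset ℕ).sum = (unob d).sum := Multiset.sum_coe _
    rw [hsum, hsd, hlu, hcoe]
    have : k - 1 + 1 = k := by omega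
    rw [this]
    omega

/-! ### Master equidistribution lemma -/

lemma master : ∀ (n : ℕ) {M : Type} [AddCommMonoid M] (F : ℕ → ℕ → M),
    ∑ l ∈ DL n, F (dinvL l) (zerosL l) = ∑ l ∈ DL n, F (areaL l) (ellL l) := by
  intro n
  induction n using Nat.strong_induction_on with
  | _ n ih =>
    intro M _ F
    rcases Nat.eq_zero_or_pos n with rfl | hn
    · rw [show DL 0 = {[]} from rfl, Finset.sum_singleton, Finset.sum_singleton]
      rfl
    · rw [D1 F n hn, D2 F n hn]
      refine Finset.sum_congr rfl fun k hk => ?_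
      rw [Finset.mem_Icc] at hk
      have hlt : n - k < n := by omega
      have key := ih (n - k) hlt
        (fun dz s => ∑ m ∈ MS (k-1) s, F (dz + k.choose 2 + m.sum) k)
      rw [Finset.sum_sigma, Finset.sum_sigma]
      exact key

/-! ### Final assembly -/

lemma toFun_ofFn {n : ℕ} (g : Fin n → ℕ) : toFun n (List.ofFn g) = g := by
  funext i
  show (List.ofFn g).getD i 0 = g i
  rw [List.getD_eq_getElem _ _ (by simp [i.isLt])]
  simp

/-- The statistics `area` and `dinv` are equidistributed on Dyck sequences of
length `n`. -/
theorem area_dinv_equidistributed (n : ℕ) :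
    ∑ᶠ g ∈ {g : Fin n → ℕ | IsDyckSeq g}, (Polynomial.X : Polynomial ℤ) ^ area g =
      ∑ᶠ g ∈ {g : Fin n → ℕ | IsDyckSeq g}, (Polynomial.X : Polynomial ℤ) ^ dinv g := by
  have hset : {g : Fin n → ℕ | IsDyckSeq g} = ↑((DL n).image (toFun n)) := by
    ext g
    simp only [Set.mem_setOf_eq, Finset.coe_image, Set.mem_image, Finset.mem_coe]
    constructor
    · intro hg
      refine ⟨List.ofFn g, ?_, toFun_ofFn g⟩
      refine mem_DL.2 ⟨?_, by simp⟩
      rw [← isDyckSeq_iff_toFun (n := n) (l := List.ofFn g) (by simp), toFun_ofFn]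
      exact hg
    · rintro ⟨l, hl, rfl⟩
      exact (isDyckSeq_iff_toFun (mem_DL.1 hl).2).2 (mem_DL.1 hl).1
  rw [hset, finsum_mem_coe_finset, finsum_mem_coe_finset]
  have hinj : ∀ x ∈ DL n, ∀ y ∈ DL n, toFun n x = toFun n y → x = y :=
    fun x hx y hy h => toFun_injOn hx hy h
  rw [Finset.sum_image hinj, Finset.sum_image hinj]
  calc ∑ l ∈ DL n, (Polynomial.X : Polynomial ℤ) ^ area (toFun n l)
      = ∑ l ∈ DL n, (Polynomial.X : Polynomial ℤ) ^ areaL l := by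
        refine Finset.sum_congr rfl fun l hl => ?_
        rw [area_toFun l n (mem_DL.1 hl).2]
    _ = ∑ l ∈ DL n, (Polynomial.X : Polynomial ℤ) ^ dinvL l :=
        (master n (fun d _ => (Polynomial.X : Polynomial ℤ) ^ d)).symm
    _ = ∑ l ∈ DL n, (Polynomial.X : Polynomial ℤ) ^ dinv (toFun n l) := by
        refine Finset.sum_congr rfl fun l hl => ?_
        rw [dinv_toFun l n (mem_DL.1 hl).2]
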